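/- Let {A, B_i, C_i; m} be jointly controllable and jointly observable with a weakly connected neighbor graph and bounded integer transmission delays d_{ij} (with d_{ii}=0, d_i = max over followers). Consider the lifted delay-free extended system {Ã, B̃_i, C̃_i; m} of dimension ñ = n + Σ_i (d_i+1)n_i with shift-register liftings of each local controller state. If the dimension bound n_i ≥ n − min_{s,λ∈σ(A)} rank [λI−A, B_s; C_{m−s}, 0] holds, then a nonzero complex number λ is NOT a fixed eigenvalue of the extended system if and only if N_{m−s} ∩ s ≠ ∅ for every subset s satisfying rank [λI−A, B_s; C_{m−s}, 0] < n. -/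

import Mathlib

open Matrix Complex

noncomputable section

variable {n m : ℕ}

/-- Fixed-mode pencil `[λI − A, B_s; C_{m−s}, 0]` of the original system, in a
rank-equivalent form (zeroed columns/rows instead of deleted ones). -/
def pencil (p q : Fin m → ℕ)
    (A : Matrix (Fin n) (Fin n) ℝ)
    (B : ∀ i, Matrix (Fin n) (Fin (p i)) ℝ)
    (C : ∀ i, Matrix (Fin (q i)) (Fin n) ℝ)
    (lam : ℂ) (s : Finset (Fin m)) :
    Matrix (Fin n ⊕ Σ i, Fin (q i)) (Fin n ⊕ Σ i, Fin (p i)) ℂ :=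
  fromBlocks (lam • 1 - A.map ofReal)
    (fun r c => if c.1 ∈ s then ofReal ((B c.1) r c.2) else 0)
    (fun r c => if r.1 ∈ s then 0 else ofReal ((C r.1) r.2 c))
    0

/-- Index type of the lifted shift registers: agent `j` stores
`z_j(t), z_j(t−1), ..., z_j(t−D j)`. -/
abbrev LiftZ (nd D : Fin m → ℕ) := Σ j : Fin m, Fin (D j + 1) × Fin (nd j)

/-- The lifted `Ã`: block diagonal with `A` and the shift registers. -/
def Alift (nd D : Fin m → ℕ) (A : Matrix (Fin n) (Fin n) ℝ) :
    Matrix (Fin n ⊕ LiftZ nd D) (Fin n ⊕ LiftZ nd D) ℂ :=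
  fromBlocks (A.map ofReal) 0 0
    (fun r c =>
      if h : r.1 = c.1 then
        (if (r.2.1 : ℕ) = (c.2.1 : ℕ) + 1 ∧ h ▸ r.2.2 = c.2.2 then 1 else 0)
      else 0)

/-- The lifted `B̃_i`: injects `u_i` into the plant and `v_i` into the head of
agent `i`'s shift register. -/
def Blift (p nd D : Fin m → ℕ) (B : ∀ i, Matrix (Fin n) (Fin (p i)) ℝ) (i : Fin m) :
    Matrix (Fin n ⊕ LiftZ nd D) (Fin (p i) ⊕ Fin (nd i)) ℂ :=
  fromBlocks ((B i).map ofReal) 0 0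
    (fun r c =>
      if h : r.1 = i then
        (if (r.2.1 : ℕ) = 0 ∧ h ▸ r.2.2 = c then 1 else 0)
      else 0)

/-- The lifted `C̃_i`: outputs `y_i = C_i x` together with, for each neighbor
`j ∈ N i`, the delayed state `z_j(t − del j i)` (register `del j i` in agent
`j`'s shift chain). -/
def Clift (q nd D : Fin m → ℕ) (C : ∀ i, Matrix (Fin (q i)) (Fin n) ℝ)
    (N : Fin m → Finset (Fin m)) (del : Fin m → Fin m → ℕ) (i : Fin m) :
    Matrix (Fin (q i) ⊕ Σ j, Fin (nd j)) (Fin n ⊕ LiftZ nd D) ℂ :=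
  fromBlocks ((C i).map ofReal) 0 0
    (fun r c =>
      if h : c.1 = r.1 then
        (if r.1 ∈ N i ∧ (c.2.1 : ℕ) = del r.1 i ∧ r.2 = h ▸ c.2.2 then 1 else 0)
      else 0)

/-- Fixed-mode pencil of the lifted extended system. -/
def liftPencil (p q nd D : Fin m → ℕ)
    (A : Matrix (Fin n) (Fin n) ℝ)
    (B : ∀ i, Matrix (Fin n) (Fin (p i)) ℝ)
    (C : ∀ i, Matrix (Fin (q i)) (Fin n) ℝ)
    (N : Fin m → Finset (Fin m)) (del : Fin m → Fin m → ℕ)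
    (lam : ℂ) (s : Finset (Fin m)) :
    Matrix ((Fin n ⊕ LiftZ nd D) ⊕ Σ i, (Fin (q i) ⊕ Σ j, Fin (nd j)))
      ((Fin n ⊕ LiftZ nd D) ⊕ Σ i, (Fin (p i) ⊕ Fin (nd i))) ℂ :=
  fromBlocks (lam • 1 - Alift nd D A)
    (fun r c => if c.1 ∈ s then Blift p nd D B c.1 r c.2 else 0)
    (fun r c => if r.1 ∈ s then 0 else Clift q nd D C N del r.1 r.2 c)
    0

end

namespace SA

noncomputable section

section RankAux


variable {α β γ δ : Type*} [Fintype α] [Fintype β] [Fintype γ] [Fintype δ]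

lemma range_prodMap' {R M N M' N' : Type*} [CommRing R] [AddCommGroup M] [AddCommGroup N]
    [AddCommGroup M'] [AddCommGroup N'] [Module R M] [Module R N] [Module R M'] [Module R N']
    (f : M →ₗ[R] N) (g : M' →ₗ[R] N') :
    LinearMap.range (f.prodMap g) = (LinearMap.range f).prod (LinearMap.range g) := by
  ext ⟨a, b⟩
  simp only [LinearMap.mem_range, Submodule.mem_prod, LinearMap.prodMap_apply, Prod.ext_iff]
  exact ⟨fun ⟨x, h⟩ => ⟨⟨x.1, h.1⟩, ⟨x.2, h.2⟩⟩, fun ⟨⟨x, hx⟩, ⟨y, hy⟩⟩ => ⟨(x, y), hx, hy⟩⟩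

lemma finrank_submodule_prod {M M' : Type*} [AddCommGroup M] [AddCommGroup M']
    [Module ℂ M] [Module ℂ M'] [FiniteDimensional ℂ M] [FiniteDimensional ℂ M']
    (p : Submodule ℂ M) (q : Submodule ℂ M') :
    Module.finrank ℂ (p.prod q) = Module.finrank ℂ p + Module.finrank ℂ q := by
  have e : (p.prod q) ≃ₗ[ℂ] (p × q) :=
    { toFun := fun x => (⟨x.1.1, x.2.1⟩, ⟨x.1.2, x.2.2⟩)
      invFun := fun y => ⟨(y.1.1, y.2.1), ⟨y.1.2, y.2.2⟩⟩
      map_add' := fun _ _ => rfl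
      map_smul' := fun _ _ => rfl
      left_inv := fun _ => rfl
      right_inv := fun _ => rfl }
  rw [e.finrank_eq, Module.finrank_prod]

lemma rank_reindex' (e₁ : α ≃ γ) (e₂ : β ≃ δ) (A : Matrix α β ℂ) :
    ((reindex e₁ e₂) A).rank = A.rank := by
  rw [Matrix.rank, Matrix.rank, mulVecLin_reindex, LinearMap.range_comp, LinearMap.range_comp,
    LinearEquiv.range, Submodule.map_top, LinearEquiv.finrank_map_eq]

lemma rank_submatrix' (A : Matrix α β ℂ) (e₁ : γ ≃ α) (e₂ : δ ≃ β) :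
    (A.submatrix e₁ e₂).rank = A.rank := by
  simpa only [reindex_apply, Equiv.symm_symm] using rank_reindex' e₁.symm e₂.symm A

lemma rank_submatrix_le' (A : Matrix α β ℂ) (f : γ → α) (g : δ → β) :
    (A.submatrix f g).rank ≤ A.rank := by
  classical
  have h : A.submatrix f g =
      (Matrix.of fun i k => if k = f i then (1 : ℂ) else 0) * A *
        (Matrix.of fun k j => if g j = k then (1 : ℂ) else 0) := by
    ext i j
    simp [Matrix.mul_apply, Finset.sum_comm, ite_mul, mul_ite, Finset.sum_ite_eq,
      Finset.sum_ite_eq']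
  rw [h]
  exact (Matrix.rank_mul_le_left _ _).trans (Matrix.rank_mul_le_right _ _)

lemma rank_fromBlocks_diag (A : Matrix α β ℂ) (Dm : Matrix γ δ ℂ) :
    (fromBlocks A 0 0 Dm).rank = A.rank + Dm.rank := by
  classical
  have h : (fromBlocks A 0 0 Dm).mulVecLin =
      ((LinearEquiv.sumArrowLequivProdArrow α γ ℂ ℂ).symm.toLinearMap.comp
        ((A.mulVecLin.prodMap Dm.mulVecLin).comp
          (LinearEquiv.sumArrowLequivProdArrow β δ ℂ ℂ).toLinearMap)) := by
    apply LinearMap.ext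
    intro x
    funext i
    cases i <;>
      simp [Matrix.mulVecLin, Matrix.fromBlocks_mulVec, LinearEquiv.sumArrowLequivProdArrow,
        Equiv.sumArrowEquivProdArrow, Matrix.mulVec, dotProduct]
  rw [Matrix.rank, h, LinearMap.range_comp, LinearMap.range_comp,
    LinearEquiv.range, Submodule.map_top, range_prodMap', LinearEquiv.finrank_map_eq,
    finrank_submodule_prod, Matrix.rank, Matrix.rank]

lemma rank_schur [DecidableEq α] [DecidableEq γ] [DecidableEq δ]
    (K : Matrix α α ℂ) [Invertible K] (V : Matrix α δ ℂ) (W : Matrix γ α ℂ)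
    (P : Matrix γ δ ℂ) :
    (fromBlocks K V W P).rank = Fintype.card α + (P - W * ⅟K * V).rank := by
  rw [fromBlocks_eq_of_invertible₁₁ K V W P]
  rw [Matrix.rank_mul_eq_left_of_isUnit_det _ _
      (by simp [Matrix.det_fromBlocks_zero₂₁]),
    Matrix.rank_mul_eq_right_of_isUnit_det _ _
      (by simp [Matrix.det_fromBlocks_zero₁₂]),
    rank_fromBlocks_diag, Matrix.rank_of_isUnit K (isUnit_of_invertible K)]


end RankAux

open Matrix Complex

variable {n m : ℕ}

abbrev OutT (q nd : Fin m → ℕ) : Type := Σ i : Fin m, (Fin (q i) ⊕ Σ j : Fin m, Fin (nd j))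
abbrev InT (p nd : Fin m → ℕ) : Type := Σ i : Fin m, (Fin (p i) ⊕ Fin (nd i))

def esum3 (A B C : Type*) : (B ⊕ (A ⊕ C)) ≃ ((A ⊕ B) ⊕ C) where
  toFun x := match x with
    | Sum.inl b => Sum.inl (Sum.inr b)
    | Sum.inr (Sum.inl a) => Sum.inl (Sum.inl a)
    | Sum.inr (Sum.inr c) => Sum.inr c
  invFun x := match x with
    | Sum.inl (Sum.inl a) => Sum.inr (Sum.inl a)
    | Sum.inl (Sum.inr b) => Sum.inl b
    | Sum.inr c => Sum.inr (Sum.inr c)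
  left_inv := by rintro (b | (a | c)) <;> rfl
  right_inv := by rintro ((a | b) | c) <;> rfl

def esplit {ι : Type*} (A : Type*) (F G : ι → Type*) :
    ((A ⊕ (Σ i, F i)) ⊕ (Σ i, G i)) ≃ (A ⊕ Σ i, (F i ⊕ G i)) where
  toFun x := match x with
    | Sum.inl (Sum.inl a) => Sum.inl a
    | Sum.inl (Sum.inr ⟨i, f⟩) => Sum.inr ⟨i, Sum.inl f⟩
    | Sum.inr ⟨i, g⟩ => Sum.inr ⟨i, Sum.inr g⟩
  invFun x := match x with
    | Sum.inl a => Sum.inl (Sum.inl a)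
    | Sum.inr ⟨i, Sum.inl f⟩ => Sum.inl (Sum.inr ⟨i, f⟩)
    | Sum.inr ⟨i, Sum.inr g⟩ => Sum.inr ⟨i, g⟩
  left_inv := by rintro ((a | ⟨i, f⟩) | ⟨i, g⟩) <;> rfl
  right_inv := by rintro (a | ⟨i, (f | g)⟩) <;> rfl

def Smat (nd D : Fin m → ℕ) : Matrix (LiftZ nd D) (LiftZ nd D) ℂ :=
  Matrix.of fun r c =>
    if h : r.1 = c.1 then
      (if (r.2.1 : ℕ) = (c.2.1 : ℕ) + 1 ∧ h ▸ r.2.2 = c.2.2 then 1 else 0)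
    else 0

def Kmat (nd D : Fin m → ℕ) (lam : ℂ) : Matrix (LiftZ nd D) (LiftZ nd D) ℂ :=
  lam • 1 - Smat nd D

def Kinv (nd D : Fin m → ℕ) (lam : ℂ) : Matrix (LiftZ nd D) (LiftZ nd D) ℂ :=
  Matrix.of fun r c =>
    if h : r.1 = c.1 then
      (if (c.2.1 : ℕ) ≤ (r.2.1 : ℕ) ∧ h ▸ r.2.2 = c.2.2 then
        lam⁻¹ ^ ((r.2.1 : ℕ) - (c.2.1 : ℕ) + 1) else 0)
    else 0

def Vmat (p nd D : Fin m → ℕ) (s : Finset (Fin m)) :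
    Matrix (LiftZ nd D) (InT p nd) ℂ :=
  Matrix.of fun z c =>
    match c with
    | ⟨i', Sum.inr cv⟩ =>
      if i' ∈ s then
        (if h : z.1 = i' then (if (z.2.1 : ℕ) = 0 ∧ h ▸ z.2.2 = cv then 1 else 0) else 0)
      else 0
    | _ => 0

def Wmat (q nd D : Fin m → ℕ) (N : Fin m → Finset (Fin m)) (d : Fin m → Fin m → ℕ)
    (s : Finset (Fin m)) :
    Matrix (Fin n ⊕ OutT q nd) (LiftZ nd D) ℂ :=
  Matrix.of fun R z =>
    match R with
    | Sum.inr ⟨i, Sum.inr ⟨jj, rr⟩⟩ =>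
      if i ∈ s then 0
      else if h : z.1 = jj then
        (if jj ∈ N i ∧ (z.2.1 : ℕ) = d jj i ∧ rr = h ▸ z.2.2 then 1 else 0)
      else 0
    | _ => 0

def Pmat (p q nd : Fin m → ℕ)
    (A : Matrix (Fin n) (Fin n) ℝ)
    (B : ∀ i, Matrix (Fin n) (Fin (p i)) ℝ)
    (C : ∀ i, Matrix (Fin (q i)) (Fin n) ℝ)
    (lam : ℂ) (s : Finset (Fin m)) :
    Matrix (Fin n ⊕ OutT q nd) (Fin n ⊕ InT p nd) ℂ :=
  Matrix.of fun R Cc =>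
    match R, Cc with
    | Sum.inl x, Sum.inl x' =>
        (lam • (1 : Matrix (Fin n) (Fin n) ℂ) - A.map ofReal) x x'
    | Sum.inl x, Sum.inr ⟨i', Sum.inl u⟩ => if i' ∈ s then ofReal (B i' x u) else 0
    | Sum.inr ⟨i, Sum.inl yr⟩, Sum.inl x' => if i ∈ s then 0 else ofReal (C i yr x')
    | _, _ => 0

def KV (p nd D : Fin m → ℕ) (s : Finset (Fin m)) (lam : ℂ) :
    Matrix (LiftZ nd D) (InT p nd) ℂ :=
  Matrix.of fun z c =>
    match c with
    | ⟨i', Sum.inr cv⟩ =>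
      if i' ∈ s then
        (if h : z.1 = i' then (if h ▸ z.2.2 = cv then lam⁻¹ ^ ((z.2.1 : ℕ) + 1) else 0) else 0)
      else 0
    | _ => 0

def WKV (p q nd : Fin m → ℕ) (N : Fin m → Finset (Fin m)) (d : Fin m → Fin m → ℕ)
    (s : Finset (Fin m)) (lam : ℂ) :
    Matrix (Fin n ⊕ OutT q nd) (InT p nd) ℂ :=
  Matrix.of fun R Cc =>
    match R, Cc with
    | Sum.inr ⟨i, Sum.inr ⟨jj, rr⟩⟩, ⟨i', Sum.inr cv⟩ =>
      if h : jj = i' then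
        (if i ∉ s ∧ i' ∈ s ∧ jj ∈ N i ∧ h ▸ rr = cv then lam⁻¹ ^ (d jj i + 1) else 0)
      else 0
    | _, _ => 0

def Gm (nd : Fin m → ℕ) (N : Fin m → Finset (Fin m)) (d : Fin m → Fin m → ℕ)
    (s : Finset (Fin m)) (lam : ℂ) :
    Matrix (Σ _i : Fin m, Σ j : Fin m, Fin (nd j)) (Σ i : Fin m, Fin (nd i)) ℂ :=
  Matrix.of fun R Cc =>
    match R, Cc with
    | ⟨i, jj, rr⟩, ⟨i', cv⟩ =>
      if h : jj = i' then
        (if i ∉ s ∧ i' ∈ s ∧ jj ∈ N i ∧ h ▸ rr = cv then -(lam⁻¹ ^ (d jj i + 1)) else 0)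
      else 0

lemma eqrec_self {α : Sort*} {F : α → Sort*} {a : α} (h : a = a) (x : F a) : h ▸ x = x := rfl

lemma S_mul_Kinv (nd D : Fin m → ℕ) (lam : ℂ) (hlam : lam ≠ 0) :
    Smat nd D * Kinv nd D lam = lam • Kinv nd D lam - 1 := by
  ext ⟨j, a, r⟩ ⟨j', b, r'⟩
  rw [Matrix.mul_apply]
  by_cases ha : 1 ≤ (a : ℕ)
  · have halt : (a : ℕ) - 1 < D j + 1 := by omega
    have hval : ((⟨(a : ℕ) - 1, halt⟩ : Fin (D j + 1)) : ℕ) = (a : ℕ) - 1 := rfl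
    rw [Finset.sum_eq_single_of_mem (⟨j, ⟨⟨(a : ℕ) - 1, halt⟩, r⟩⟩ : LiftZ nd D)
      (Finset.mem_univ _) ?_]
    · -- main term
      have h1 : Smat nd D ⟨j, a, r⟩ ⟨j, ⟨⟨(a : ℕ) - 1, halt⟩, r⟩⟩ = 1 := by
        simp only [Smat, Matrix.of_apply, dif_pos rfl, eqrec_self, dite_true, and_true]
        rw [if_pos]
        omega
      rw [h1, one_mul]
      by_cases hj : j = j'
      · subst hj
        simp only [Kinv, Matrix.of_apply, dif_pos rfl, eqrec_self, Matrix.sub_apply,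
          Matrix.smul_apply, Matrix.one_apply, smul_eq_mul]
        by_cases hr : r = r'
        · subst hr
          simp only [and_true]
          rcases lt_trichotomy (b : ℕ) (a : ℕ) with hb | hb | hb
          · rw [if_pos (by omega), if_pos (by omega), if_neg (by
              simp only [Sigma.mk.inj_iff, heq_eq_eq, Prod.mk.injEq, true_and]
              intro hh
              exact absurd (congrArg (fun x : Fin (D j + 1) => (x : ℕ)) hh.1) (by omega))]
            have e1 : (a : ℕ) - 1 - (b : ℕ) + 1 = (a : ℕ) - (b : ℕ) := by omega
            have e2 : (a : ℕ) - (b : ℕ) + 1 = ((a : ℕ) - (b : ℕ)) + 1 := rfl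
            rw [e1, e2, pow_succ, sub_zero]
            simp only [dite_true]
            field_simp
          · rw [if_neg (by omega), if_pos (by omega), if_pos (by
              simp only [Sigma.mk.inj_iff, heq_eq_eq, Prod.mk.injEq, true_and]
              exact ⟨Fin.ext (by omega), trivial⟩)]
            have e : (a : ℕ) - (b : ℕ) + 1 = 1 := by omega
            rw [e, pow_one]
            simp only [dite_true]
            field_simp
            simp
          · rw [if_neg (by omega), if_neg (by omega), if_neg (by
              simp only [Sigma.mk.inj_iff, heq_eq_eq, Prod.mk.injEq, true_and]
              intro hh
              exact absurd (congrArg (fun x : Fin (D j + 1) => (x : ℕ)) hh.1) (by omega))]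
            simp
        · rw [if_neg (by tauto), if_neg (by tauto), if_neg (by
            simp only [Sigma.mk.inj_iff, heq_eq_eq, Prod.mk.injEq, true_and]
            tauto)]
          simp
      · simp only [Kinv, Matrix.of_apply, dif_neg hj, Matrix.sub_apply, Matrix.smul_apply,
          Matrix.one_apply, smul_eq_mul]
        rw [if_neg (by simp only [Sigma.mk.inj_iff]; tauto)]
        simp
    · -- other terms vanish
      rintro ⟨j₀, a₀, r₀⟩ - hne
      by_cases hj : j = j₀
      · subst hj
        simp only [Smat, Matrix.of_apply, dif_pos rfl, eqrec_self, dite_true]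
        rw [if_neg, zero_mul]
        rintro ⟨h1, h2⟩
        exact hne (by
          subst h2
          simp only [Sigma.mk.inj_iff, heq_eq_eq, Prod.mk.injEq, true_and]
          exact ⟨Fin.ext (by omega), trivial⟩)
      · simp only [Smat, Matrix.of_apply, dif_neg hj, zero_mul]
  · -- a = 0 : S row is zero
    rw [Finset.sum_eq_zero ?_]
    · by_cases hj : j = j'
      · subst hj
        simp only [Kinv, Matrix.of_apply, dif_pos rfl, eqrec_self, Matrix.sub_apply,
          Matrix.smul_apply, Matrix.one_apply, smul_eq_mul]
        by_cases hr : r = r'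
        · subst hr
          simp only [and_true]
          by_cases hb : (b : ℕ) ≤ (a : ℕ)
          · rw [if_pos hb, if_pos (by
              simp only [Sigma.mk.inj_iff, heq_eq_eq, Prod.mk.injEq, true_and]
              exact ⟨Fin.ext (by omega), trivial⟩)]
            have e : (a : ℕ) - (b : ℕ) + 1 = 1 := by omega
            rw [e, pow_one]
            simp only [dite_true]
            field_simp
            simp
          · rw [if_neg hb, if_neg (by
              simp only [Sigma.mk.inj_iff, heq_eq_eq, Prod.mk.injEq, true_and]
              intro hh
              exact absurd (congrArg (fun x : Fin (D j + 1) => (x : ℕ)) hh.1) (by omega))]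
            simp
        · rw [if_neg (by tauto), if_neg (by
            simp only [Sigma.mk.inj_iff, heq_eq_eq, Prod.mk.injEq, true_and]
            tauto)]
          simp
      · simp only [Kinv, Matrix.of_apply, dif_neg hj, Matrix.sub_apply, Matrix.smul_apply,
          Matrix.one_apply, smul_eq_mul]
        rw [if_neg (by simp only [Sigma.mk.inj_iff]; tauto)]
        simp
    · rintro ⟨j₀, a₀, r₀⟩ -
      by_cases hj : j = j₀
      · subst hj
        simp only [Smat, Matrix.of_apply, dif_pos rfl, eqrec_self, dite_true]
        rw [if_neg (by omega), zero_mul]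
      · simp only [Smat, Matrix.of_apply, dif_neg hj, zero_mul]

lemma Kmat_mul_Kinv (nd D : Fin m → ℕ) (lam : ℂ) (hlam : lam ≠ 0) :
    Kmat nd D lam * Kinv nd D lam = 1 := by
  rw [Kmat, Matrix.sub_mul, Matrix.smul_mul, Matrix.one_mul, S_mul_Kinv nd D lam hlam,
    sub_sub_cancel]

lemma Kinv_mul_Kmat (nd D : Fin m → ℕ) (lam : ℂ) (hlam : lam ≠ 0) :
    Kinv nd D lam * Kmat nd D lam = 1 :=
  mul_eq_one_comm.mp (Kmat_mul_Kinv nd D lam hlam)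

lemma Kinv_mul_V (p nd D : Fin m → ℕ) (s : Finset (Fin m)) (lam : ℂ) :
    Kinv nd D lam * Vmat p nd D s = KV p nd D s lam := by
  ext z ⟨i', cc⟩
  rcases cc with u | cv
  · rw [Matrix.mul_apply]
    simp [Vmat, KV]
  · by_cases hs : i' ∈ s
    · rw [Matrix.mul_apply]
      rw [Finset.sum_eq_single_of_mem (⟨i', ⟨0, cv⟩⟩ : LiftZ nd D) (Finset.mem_univ _) ?_]
      · have hV : Vmat p nd D s ⟨i', ⟨0, cv⟩⟩ ⟨i', Sum.inr cv⟩ = 1 := by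
          simp [Vmat, hs, eqrec_self]
        rw [hV, mul_one]
        rcases z with ⟨j, a, r⟩
        by_cases hj : j = i'
        · subst hj
          simp [Kinv, KV, eqrec_self, hs]
        · simp [Kinv, KV, dif_neg hj, hs]
      · rintro ⟨j₀, a₀, r₀⟩ - hne
        by_cases hj : j₀ = i'
        · subst hj
          simp only [Vmat, Matrix.of_apply, hs, if_true, dif_pos rfl, eqrec_self, dite_true]
          rw [if_neg, mul_zero]
          rintro ⟨h1, h2⟩
          exact hne (by
            subst h2
            simp only [Sigma.mk.inj_iff, heq_eq_eq, Prod.mk.injEq, true_and]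
            exact ⟨Fin.ext h1, trivial⟩)
        · simp [Vmat, dif_neg hj]
    · rw [Matrix.mul_apply]
      simp [Vmat, KV, hs]

set_option maxHeartbeats 2000000 in
lemma W_mul_KV (p q nd D : Fin m → ℕ) (N : Fin m → Finset (Fin m)) (d : Fin m → Fin m → ℕ)
    (s : Finset (Fin m)) (lam : ℂ) (hDub : ∀ i j, i ∈ N j → d i j ≤ D i) :
    (Wmat (n := n) q nd D N d s) * KV p nd D s lam = WKV p q nd N d s lam := by
  ext R ⟨i', cc⟩
  rcases R with x | ⟨i, yr | ⟨jj, rr⟩⟩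
  · rw [Matrix.mul_apply, Finset.sum_eq_zero (fun z _ => by simp [Wmat])]
    simp [WKV]
  · rw [Matrix.mul_apply, Finset.sum_eq_zero (fun z _ => by simp [Wmat])]
    simp [WKV]
  · rcases cc with u | cv
    · rw [Matrix.mul_apply, Finset.sum_eq_zero (fun z _ => by simp [KV])]
      simp [WKV]
    · by_cases his : i ∈ s
      · rw [Matrix.mul_apply, Finset.sum_eq_zero (fun z _ => by simp [Wmat, his])]
        simp [WKV, his]
      · by_cases hN : jj ∈ N i
        · have hlt : d jj i < D jj + 1 := Nat.lt_succ_of_le (hDub jj i hN)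
          rw [Matrix.mul_apply]
          rw [Finset.sum_eq_single_of_mem (⟨jj, ⟨⟨d jj i, hlt⟩, rr⟩⟩ : LiftZ nd D)
            (Finset.mem_univ _) ?_]
          · have hW : Wmat (n := n) q nd D N d s (Sum.inr ⟨i, Sum.inr ⟨jj, rr⟩⟩)
                ⟨jj, ⟨⟨d jj i, hlt⟩, rr⟩⟩ = 1 := by
              simp [Wmat, his, hN, eqrec_self]
            rw [hW, one_mul]
            by_cases hj : jj = i'
            · subst hj
              by_cases hs : jj ∈ s
              · simp [KV, WKV, hs, his, hN, eqrec_self]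
              · simp [KV, WKV, hs]
            · simp [KV, WKV, dif_neg hj]
          · rintro ⟨j₀, a₀, r₀⟩ - hne
            by_cases hj : j₀ = jj
            · subst hj
              simp only [Wmat, Matrix.of_apply, his, if_false, ite_false,
                dif_pos rfl, eqrec_self, dite_true]
              rw [if_neg, zero_mul]
              rintro ⟨-, h2, h3⟩
              exact hne (by
                subst h3
                simp only [Sigma.mk.inj_iff, heq_eq_eq, Prod.mk.injEq, true_and]
                exact ⟨Fin.ext h2, trivial⟩)
            · simp [Wmat, his, hj]
        · rw [Matrix.mul_apply]
          rw [Finset.sum_eq_zero ?_]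
          · simp [WKV, hN, his]
          · rintro ⟨j₀, a₀, r₀⟩ -
            by_cases hj : j₀ = jj
            · subst hj; simp [Wmat, his, hN]
            · simp [Wmat, his, hj]


def Vext (p nd D : Fin m → ℕ) (s : Finset (Fin m)) :
    Matrix (LiftZ nd D) (Fin n ⊕ InT p nd) ℂ :=
  Matrix.of fun z c =>
    match c with
    | Sum.inl _ => 0
    | Sum.inr c' => Vmat p nd D s z c'

def KVext (p nd D : Fin m → ℕ) (s : Finset (Fin m)) (lam : ℂ) :
    Matrix (LiftZ nd D) (Fin n ⊕ InT p nd) ℂ :=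
  Matrix.of fun z c =>
    match c with
    | Sum.inl _ => 0
    | Sum.inr c' => KV p nd D s lam z c'

def WKVext (p q nd : Fin m → ℕ) (N : Fin m → Finset (Fin m)) (d : Fin m → Fin m → ℕ)
    (s : Finset (Fin m)) (lam : ℂ) :
    Matrix (Fin n ⊕ OutT q nd) (Fin n ⊕ InT p nd) ℂ :=
  Matrix.of fun R c =>
    match c with
    | Sum.inl _ => 0
    | Sum.inr c' => WKV p q nd N d s lam R c'

lemma Kinv_mul_Vext (p nd D : Fin m → ℕ) (s : Finset (Fin m)) (lam : ℂ) :
    Kinv nd D lam * Vext (n := n) p nd D s = KVext p nd D s lam := by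
  ext z c
  rcases c with x | c'
  · rw [Matrix.mul_apply]
    simp [Vext, KVext]
  · show _ = KV p nd D s lam z c'
    rw [← Kinv_mul_V p nd D s lam, Matrix.mul_apply, Matrix.mul_apply]
    rfl

lemma W_mul_KVext (p q nd D : Fin m → ℕ) (N : Fin m → Finset (Fin m)) (d : Fin m → Fin m → ℕ)
    (s : Finset (Fin m)) (lam : ℂ) (hDub : ∀ i j, i ∈ N j → d i j ≤ D i) :
    (Wmat (n := n) q nd D N d s) * KVext p nd D s lam = WKVext p q nd N d s lam := by
  ext R c
  rcases c with x | c'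
  · rw [Matrix.mul_apply]
    simp [KVext, WKVext]
  · show _ = WKV p q nd N d s lam R c'
    rw [← W_mul_KV p q nd D N d s lam hDub, Matrix.mul_apply, Matrix.mul_apply]
    rfl

set_option maxHeartbeats 2000000 in
lemma lift_blocks (p q nd D : Fin m → ℕ)
    (A : Matrix (Fin n) (Fin n) ℝ)
    (B : ∀ i, Matrix (Fin n) (Fin (p i)) ℝ)
    (C : ∀ i, Matrix (Fin (q i)) (Fin n) ℝ)
    (N : Fin m → Finset (Fin m)) (d : Fin m → Fin m → ℕ)
    (lam : ℂ) (s : Finset (Fin m)) :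
    (liftPencil p q nd D A B C N d lam s).submatrix
        (esum3 (Fin n) (LiftZ nd D) (OutT q nd)) (esum3 (Fin n) (LiftZ nd D) (InT p nd)) =
      fromBlocks (Kmat nd D lam) (Vext p nd D s) (Wmat q nd D N d s)
        (Pmat p q nd A B C lam s) := by
  ext R c
  rcases R with z | x | ⟨i, yr | ⟨jj, rr⟩⟩ <;>
    rcases c with z' | x' | ⟨i', u | cv⟩ <;>
      simp [liftPencil, Alift, Blift, Clift, Kmat, Smat, Vext, Vmat, Wmat, Pmat, esum3,
        Matrix.one_apply, fromBlocks, Sum.inr.injEq, Sum.inl.injEq]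

set_option maxHeartbeats 2000000 in
lemma schur_blocks (p q nd : Fin m → ℕ)
    (A : Matrix (Fin n) (Fin n) ℝ)
    (B : ∀ i, Matrix (Fin n) (Fin (p i)) ℝ)
    (C : ∀ i, Matrix (Fin (q i)) (Fin n) ℝ)
    (N : Fin m → Finset (Fin m)) (d : Fin m → Fin m → ℕ)
    (lam : ℂ) (s : Finset (Fin m)) :
    (Pmat p q nd A B C lam s - WKVext p q nd N d s lam).submatrix
        (esplit (Fin n) (fun i => Fin (q i)) (fun _ => Σ j, Fin (nd j)))
        (esplit (Fin n) (fun i => Fin (p i)) (fun i => Fin (nd i))) =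
      fromBlocks (pencil p q A B C lam s) 0 0 (Gm nd N d s lam) := by
  ext R c
  rcases R with (x | ⟨i, yr⟩) | ⟨i, jj, rr⟩ <;>
    rcases c with (x' | ⟨i', u⟩) | ⟨i', cv⟩ <;>
      (simp [Pmat, WKVext, WKV, Gm, pencil, esplit, Matrix.one_apply, fromBlocks]
       try (split_ifs <;> simp))

lemma card_liftZ (nd D : Fin m → ℕ) :
    Fintype.card (LiftZ nd D) = ∑ i, (D i + 1) * nd i := by
  simp [Fintype.card_sigma]

lemma rank_lift (p q nd D : Fin m → ℕ)
    (A : Matrix (Fin n) (Fin n) ℝ)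
    (B : ∀ i, Matrix (Fin n) (Fin (p i)) ℝ)
    (C : ∀ i, Matrix (Fin (q i)) (Fin n) ℝ)
    (N : Fin m → Finset (Fin m)) (d : Fin m → Fin m → ℕ)
    (lam : ℂ) (s : Finset (Fin m)) (hlam : lam ≠ 0)
    (hDub : ∀ i j, i ∈ N j → d i j ≤ D i) :
    (liftPencil p q nd D A B C N d lam s).rank
      = (∑ i, (D i + 1) * nd i) +
        ((pencil p q A B C lam s).rank + (Gm nd N d s lam).rank) := by
  haveI hinv : Invertible (Kmat nd D lam) :=
    ⟨Kinv nd D lam, Kinv_mul_Kmat nd D lam hlam, Kmat_mul_Kinv nd D lam hlam⟩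
  rw [← rank_submatrix' (liftPencil p q nd D A B C N d lam s)
      (esum3 (Fin n) (LiftZ nd D) (OutT q nd)) (esum3 (Fin n) (LiftZ nd D) (InT p nd)),
    lift_blocks p q nd D A B C N d lam s,
    rank_schur (Kmat nd D lam) (Vext p nd D s) (Wmat q nd D N d s) (Pmat p q nd A B C lam s)]
  have hio : ⅟(Kmat nd D lam) = Kinv nd D lam := invOf_eq_right_inv (Kmat_mul_Kinv nd D lam hlam)
  rw [hio, Matrix.mul_assoc, Kinv_mul_Vext p nd D s lam,
    W_mul_KVext p q nd D N d s lam hDub,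
    ← rank_submatrix' (Pmat p q nd A B C lam s - WKVext p q nd N d s lam)
      (esplit (Fin n) (fun i => Fin (q i)) (fun _ => Σ j, Fin (nd j)))
      (esplit (Fin n) (fun i => Fin (p i)) (fun i => Fin (nd i))),
    schur_blocks p q nd A B C N d lam s, rank_fromBlocks_diag, card_liftZ]

lemma Gm_zero (nd : Fin m → ℕ) (N : Fin m → Finset (Fin m)) (d : Fin m → Fin m → ℕ)
    (s : Finset (Fin m)) (lam : ℂ)
    (hT : ¬(((sᶜ).biUnion N) ∩ s).Nonempty) : Gm nd N d s lam = 0 := by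
  ext ⟨i, jj, rr⟩ ⟨i', cv⟩
  by_cases hj : jj = i'
  · subst hj
    simp only [Gm, Matrix.of_apply, dif_pos rfl, eqrec_self, dite_true, Matrix.zero_apply]
    rw [if_neg]
    rintro ⟨h1, h2, h3, -⟩
    exact hT ⟨jj, Finset.mem_inter.mpr
      ⟨Finset.mem_biUnion.mpr ⟨i, Finset.mem_compl.mpr h1, h3⟩, h2⟩⟩
  · simp [Gm, hj]

lemma Gm_rank_ge (nd : Fin m → ℕ) (N : Fin m → Finset (Fin m)) (d : Fin m → Fin m → ℕ)
    (s : Finset (Fin m)) (lam : ℂ) (hlam : lam ≠ 0) {i' iw : Fin m}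
    (hs : i' ∈ s) (hiw : iw ∉ s) (hN : i' ∈ N iw) :
    nd i' ≤ (Gm nd N d s lam).rank := by
  have hsub : (Gm nd N d s lam).submatrix
      (fun c : Fin (nd i') => (⟨iw, i', c⟩ : Σ _i : Fin m, Σ j, Fin (nd j)))
      (fun c : Fin (nd i') => (⟨i', c⟩ : Σ i, Fin (nd i))) =
      Matrix.diagonal (fun _ => -(lam⁻¹ ^ (d i' iw + 1))) := by
    ext c c'
    by_cases hc : c = c'
    · subst hc
      simp [Gm, Matrix.diagonal, hs, hiw, hN, eqrec_self]
    · simp [Gm, Matrix.diagonal, hc, hs, hiw, hN, eqrec_self]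
  have hne : ∀ x : Fin (nd i'), -(lam⁻¹ ^ (d i' iw + 1)) ≠ 0 := by
    intro x
    exact neg_ne_zero.mpr (pow_ne_zero _ (inv_ne_zero hlam))
  have hrank : ((Gm nd N d s lam).submatrix
      (fun c : Fin (nd i') => (⟨iw, i', c⟩ : Σ _i : Fin m, Σ j, Fin (nd j)))
      (fun c : Fin (nd i') => (⟨i', c⟩ : Σ i, Fin (nd i)))).rank = nd i' := by
    rw [hsub, Matrix.rank_diagonal, Fintype.card_subtype,
      Finset.filter_true_of_mem (fun x _ => hne x)]
    simp
  calc nd i' = _ := hrank.symm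
    _ ≤ _ := rank_submatrix_le' _ _ _

lemma pencil_rank_ge (p q : Fin m → ℕ)
    (A : Matrix (Fin n) (Fin n) ℝ)
    (B : ∀ i, Matrix (Fin n) (Fin (p i)) ℝ)
    (C : ∀ i, Matrix (Fin (q i)) (Fin n) ℝ)
    (lam : ℂ) (s : Finset (Fin m))
    (hsp : lam ∉ spectrum ℂ (A.map Complex.ofReal)) :
    n ≤ (pencil p q A B C lam s).rank := by
  have hU : IsUnit (lam • (1 : Matrix (Fin n) (Fin n) ℂ) - A.map Complex.ofReal) := by
    have := spectrum.notMem_iff.mp hsp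
    rwa [Algebra.algebraMap_eq_smul_one] at this
  have hsub : (pencil p q A B C lam s).submatrix (Sum.inl : Fin n → _) (Sum.inl : Fin n → _)
      = lam • 1 - A.map Complex.ofReal := by
    ext x x'
    rfl
  have h1 : ((pencil p q A B C lam s).submatrix (Sum.inl : Fin n → _)
      (Sum.inl : Fin n → _)).rank = n := by
    rw [hsub, Matrix.rank_of_isUnit _ hU, Fintype.card_fin]
  calc n = _ := h1.symm
    _ ≤ _ := rank_submatrix_le' _ _ _

end

end SA

/-- For a jointly controllable, jointly observable system with a weakly
connected neighbor graph and bounded transmission delays `d i j` (with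
`d i i = 0` and `D i` the maximum delay over agent `i`'s followers), if the
integrator dimensions satisfy the lower bound, then a **nonzero** complex `λ`
is not a fixed eigenvalue of the lifted extended system if and only if
`N_{m−s} ∩ s ≠ ∅` for every subset `s` with `rank [λI − A, B_s; C_{m−s}, 0] < n`. -/
theorem stmt16 {n m : ℕ} (p q nd : Fin m → ℕ)
    (A : Matrix (Fin n) (Fin n) ℝ)
    (B : ∀ i, Matrix (Fin n) (Fin (p i)) ℝ)
    (C : ∀ i, Matrix (Fin (q i)) (Fin n) ℝ)
    (N : Fin m → Finset (Fin m))
    (d : Fin m → Fin m → ℕ) (D : Fin m → ℕ)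
    (hself : ∀ i, i ∈ N i)
    (hdii : ∀ i, d i i = 0)
    -- `D i` is the maximum of `d i j` over the followers `j` of `i`
    (hDub : ∀ i j, i ∈ N j → d i j ≤ D i)
    (hDatt : ∀ i, ∃ j, i ∈ N j ∧ d i j = D i)
    -- weakly connected neighbor graph
    (hwc : ∀ i j, Relation.ReflTransGen (fun a b => a ∈ N b ∨ b ∈ N a) i j)
    -- joint controllability and joint observability
    (hctrb : ∀ lam : ℂ, (pencil p q A B C lam Finset.univ).rank = n)
    (hobs : ∀ lam : ℂ, (pencil p q A B C lam ∅).rank = n)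
    -- n_i ≥ n − min_{s, λ ∈ σ(A)} rank [λI − A, B_s; C_{m−s}, 0]
    (hbound : ∀ i, ∀ (s : Finset (Fin m)) (lam : ℂ),
      lam ∈ spectrum ℂ (A.map Complex.ofReal) →
      n - (pencil p q A B C lam s).rank ≤ nd i) :
    ∀ lam : ℂ, lam ≠ 0 →
      ((∀ s : Finset (Fin m),
          n + ∑ i, (D i + 1) * nd i ≤ (liftPencil p q nd D A B C N d lam s).rank) ↔
        ∀ s : Finset (Fin m),
          (pencil p q A B C lam s).rank < n → (((sᶜ).biUnion N) ∩ s).Nonempty) := by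
  intro lam hlam
  have hrankeq : ∀ s : Finset (Fin m),
      (liftPencil p q nd D A B C N d lam s).rank
        = (∑ i, (D i + 1) * nd i) +
          ((pencil p q A B C lam s).rank + (SA.Gm nd N d s lam).rank) :=
    fun s => SA.rank_lift p q nd D A B C N d lam s hlam hDub
  constructor
  · intro hL s hs
    by_contra hT
    have h1 := hL s
    rw [hrankeq s, SA.Gm_zero nd N d s lam hT, Matrix.rank_zero] at h1
    omega
  · intro hR s
    rw [hrankeq s]
    have key : n ≤ (pencil p q A B C lam s).rank + (SA.Gm nd N d s lam).rank := by
      by_cases hp : (pencil p q A B C lam s).rank < n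
      · obtain ⟨i', hi'⟩ := hR s hp
        rw [Finset.mem_inter] at hi'
        obtain ⟨hib, his⟩ := hi'
        obtain ⟨iw, hiwc, hiwN⟩ := Finset.mem_biUnion.mp hib
        have hiw : iw ∉ s := Finset.mem_compl.mp hiwc
        have h2 : nd i' ≤ (SA.Gm nd N d s lam).rank :=
          SA.Gm_rank_ge nd N d s lam hlam his hiw hiwN
        by_cases hsp : lam ∈ spectrum ℂ (A.map Complex.ofReal)
        · have h3 := hbound i' s lam hsp
          omega
        · have h4 := SA.pencil_rank_ge p q A B C lam s hsp
          omega
      · omega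
    omega
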